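/- arXiv:2605.30860 — 3 statements merged into one kernel-verified Lean document; each statement's English description precedes it below -/
import Mathlib

section
/- Let s_τ = s₀ exp(-τ/P + √(2τ/P) G) with G ~ N(0,1) and s₀ ≥ 0 fixed. Then the derivative of E[exp(-s_τ/2)] with respect to τ at τ = 0 equals (1/(4P)) exp(-s₀/2) s₀². -/
set_option maxHeartbeats 1000000

open Real Set MeasureTheory ProbabilityTheory Filter Topology
open scoped NNReal ENNReal

namespace S3

noncomputable def h (a x : ℝ) : ℝ := Real.exp (-(a * Real.exp x))
noncomputable def h1 (a x : ℝ) : ℝ := -(a * Real.exp x) * h a x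
noncomputable def h2 (a x : ℝ) : ℝ := ((a * Real.exp x)^2 - a * Real.exp x) * h a x
noncomputable def h3 (a x : ℝ) : ℝ :=
  (-(a * Real.exp x)^3 + 3*(a * Real.exp x)^2 - a * Real.exp x) * h a x

lemma hasDerivAt_h (a x : ℝ) : HasDerivAt (h a) (h1 a x) x := by
  have : HasDerivAt (fun x : ℝ => -(a * Real.exp x)) (-(a * Real.exp x)) x :=
    ((Real.hasDerivAt_exp x).const_mul a).neg
  refine this.exp.congr_deriv ?_
  simp only [h, h1]; ring

lemma hasDerivAt_h1 (a x : ℝ) : HasDerivAt (h1 a) (h2 a x) x := by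
  have hu : HasDerivAt (fun x : ℝ => -(a * Real.exp x)) (-(a * Real.exp x)) x :=
    ((Real.hasDerivAt_exp x).const_mul a).neg
  have := hu.mul (hasDerivAt_h a x)
  refine this.congr_deriv ?_
  simp only [h1, h2, h]
  ring

lemma hasDerivAt_h2 (a x : ℝ) : HasDerivAt (h2 a) (h3 a x) x := by
  have hu : HasDerivAt (fun x : ℝ => a * Real.exp x) (a * Real.exp x) x :=
    (Real.hasDerivAt_exp x).const_mul a
  have hsq : HasDerivAt (fun x : ℝ => (a * Real.exp x)^2 - a * Real.exp x)
      (2 * (a * Real.exp x) * (a * Real.exp x) - a * Real.exp x) x := by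
    simpa [Pi.sub_def, Pi.pow_def] using ((hu.pow 2).sub hu)
  have := hsq.mul (hasDerivAt_h a x)
  refine this.congr_deriv ?_
  simp only [h2, h3, h1, h]
  ring

lemma pow_mul_exp_neg_le (u : ℝ) (hu : 0 ≤ u) (n : ℕ) : u ^ n * Real.exp (-u) ≤ (n.factorial : ℝ) := by
  rw [Real.exp_neg, mul_inv_le_iff₀' (Real.exp_pos u)]
  have := Real.pow_div_factorial_le_exp u hu n
  rw [div_le_iff₀ (by positivity)] at this
  linarith [this]

lemma abs_h3_le (a : ℝ) (ha : 0 ≤ a) (x : ℝ) : |h3 a x| ≤ 13 := by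
  set u : ℝ := a * Real.exp x with hu
  have hu0 : 0 ≤ u := by positivity
  have e1 : u ^ 1 * Real.exp (-u) ≤ 1 := by simpa using pow_mul_exp_neg_le u hu0 1
  have e2 : u ^ 2 * Real.exp (-u) ≤ 2 := by
    have := pow_mul_exp_neg_le u hu0 2; norm_num [Nat.factorial] at this; linarith
  have e3 : u ^ 3 * Real.exp (-u) ≤ 6 := by
    have := pow_mul_exp_neg_le u hu0 3; norm_num [Nat.factorial] at this; linarith
  have hh : h a x = Real.exp (-u) := rfl
  have hpos : 0 < Real.exp (-u) := Real.exp_pos _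
  rw [h3, ← hu, hh, abs_mul, abs_of_pos hpos]
  have : |(-u^3 + 3*u^2 - u)| ≤ u^3 + 3*u^2 + u := by
    rw [abs_le]; constructor <;> nlinarith
  calc |(-u^3 + 3*u^2 - u)| * Real.exp (-u) ≤ (u^3 + 3*u^2 + u) * Real.exp (-u) := by
        apply mul_le_mul_of_nonneg_right this hpos.le
    _ ≤ 13 := by nlinarith

lemma mvt_bound {f f' : ℝ → ℝ} {C x : ℝ} (hd : ∀ y, HasDerivAt f (f' y) y)
    (hb : ∀ y ∈ uIcc (0:ℝ) x, |f' y| ≤ C) : |f x - f 0| ≤ C * |x| := by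
  have := (convex_uIcc (0:ℝ) x).norm_image_sub_le_of_norm_hasDerivWithin_le
    (fun y _ => (hd y).hasDerivWithinAt) (fun y hy => hb y hy)
    left_mem_uIcc right_mem_uIcc
  simpa using this

lemma abs_mem_uIcc {x y : ℝ} (hy : y ∈ uIcc (0:ℝ) x) : |y| ≤ |x| := by
  have h1 := le_abs_self x
  have h2 := neg_abs_le x
  rcases mem_uIcc.1 hy with ⟨ha, hb⟩ | ⟨ha, hb⟩ <;> rw [abs_le] <;> constructor <;> linarith

lemma taylor_bound (a : ℝ) (ha : 0 ≤ a) (x : ℝ) :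
    |h a x - (h a 0 + h1 a 0 * x + h2 a 0 * (x^2/2))| ≤ 13 * |x|^3 := by
  have step1 : ∀ z : ℝ, |h2 a z - h2 a 0| ≤ 13 * |z| :=
    fun z => mvt_bound (hasDerivAt_h2 a) (fun y _ => abs_h3_le a ha y)
  have step2 : ∀ z : ℝ, |h1 a z - h1 a 0 - h2 a 0 * z| ≤ 13 * |z|^2 := by
    intro z
    have hd : ∀ y, HasDerivAt (fun y => h1 a y - h1 a 0 - h2 a 0 * y)
        (h2 a y - h2 a 0) y := by
      intro y
      simpa [Pi.sub_def] using ((hasDerivAt_h1 a y).sub_const (h1 a 0)).sub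
        ((hasDerivAt_id y).const_mul (h2 a 0))
    have hb : ∀ y ∈ uIcc (0:ℝ) z, |h2 a y - h2 a 0| ≤ 13 * |z| := by
      intro y hy
      exact (step1 y).trans (by nlinarith [abs_mem_uIcc hy, abs_nonneg y, abs_nonneg z])
    have := mvt_bound hd hb
    simp only [mul_zero, sub_zero, sub_self] at this
    calc |h1 a z - h1 a 0 - h2 a 0 * z| ≤ 13 * |z| * |z| := this
      _ = 13 * |z|^2 := by ring
  have hd : ∀ y, HasDerivAt (fun y => h a y - h a 0 - h1 a 0 * y - h2 a 0 * (y^2/2))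
      (h1 a y - h1 a 0 - h2 a 0 * y) y := by
    intro y
    have : HasDerivAt (fun y : ℝ => h2 a 0 * (y^2/2)) (h2 a 0 * y) y := by
      have := ((hasDerivAt_pow 2 y).div_const 2).const_mul (h2 a 0)
      refine this.congr_deriv ?_
      norm_num
    simpa [Pi.sub_def] using (((hasDerivAt_h a y).sub_const (h a 0)).sub
      ((hasDerivAt_id y).const_mul (h1 a 0))).sub this
  have hb : ∀ y ∈ uIcc (0:ℝ) x, |h1 a y - h1 a 0 - h2 a 0 * y| ≤ 13 * |x|^2 := by
    intro y hy
    refine (step2 y).trans ?_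
    have := abs_mem_uIcc hy
    nlinarith [abs_nonneg y, abs_nonneg x]
  have := mvt_bound hd hb
  simp only [mul_zero, sub_zero, sub_self, ne_eq, OfNat.ofNat_ne_zero, not_false_eq_true, zero_pow,
    zero_div] at this
  calc |h a x - (h a 0 + h1 a 0 * x + h2 a 0 * (x^2/2))|
      = |h a x - h a 0 - h1 a 0 * x - h2 a 0 * (x^2/2)| := by ring_nf
    _ ≤ 13 * |x|^2 * |x| := this
    _ = 13 * |x|^3 := by ring


lemma pdf_eq (x : ℝ) :
    gaussianPDFReal 0 1 x = (Real.sqrt (2*π))⁻¹ * Real.exp (-x^2/2) := by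
  simp [gaussianPDFReal]

lemma gauss_integral_eq (f : ℝ → ℝ) :
    ∫ x, f x ∂(gaussianReal 0 1) = ∫ x, gaussianPDFReal 0 1 x * f x := by
  rw [gaussianReal_of_var_ne_zero _ one_ne_zero]
  have hm : Measurable fun x => Real.toNNReal (gaussianPDFReal 0 1 x) :=
    (measurable_gaussianPDFReal 0 1).real_toNNReal
  have hd : (gaussianPDF 0 1) = fun x => ((Real.toNNReal (gaussianPDFReal 0 1 x) : ℝ≥0) : ℝ≥0∞) :=
    rfl
  rw [hd, integral_withDensity_eq_integral_smul hm f]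
  refine integral_congr_ae (Filter.EventuallyEq.of_eq (funext fun x => ?_))
  rw [NNReal.smul_def, Real.coe_toNNReal _ (gaussianPDFReal_nonneg 0 1 x), smul_eq_mul]

lemma gauss_integrable_iff (f : ℝ → ℝ) :
    Integrable f (gaussianReal 0 1) ↔ Integrable (fun x => gaussianPDFReal 0 1 x * f x) := by
  rw [gaussianReal_of_var_ne_zero _ one_ne_zero]
  have hm : Measurable fun x => Real.toNNReal (gaussianPDFReal 0 1 x) :=
    (measurable_gaussianPDFReal 0 1).real_toNNReal
  have hd : (gaussianPDF 0 1) = fun x => ((Real.toNNReal (gaussianPDFReal 0 1 x) : ℝ≥0) : ℝ≥0∞) :=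
    rfl
  rw [hd, integrable_withDensity_iff_integrable_smul hm]
  refine integrable_congr (Filter.EventuallyEq.of_eq (funext fun x => ?_))
  rw [NNReal.smul_def, Real.coe_toNNReal _ (gaussianPDFReal_nonneg 0 1 x), smul_eq_mul]

lemma integrable_pow_gauss {n : ℕ} (hn : n ≤ 4) :
    Integrable (fun x : ℝ => x ^ n * Real.exp (-x^2/2)) := by
  have key : ∀ x : ℝ, |x|^n * Real.exp (-x^2/2) ≤ 33 * Real.exp (-(4⁻¹) * x^2) := by
    intro x
    have habs : |x|^n ≤ 1 + x^4 := by
      rcases le_or_gt (|x|) 1 with hx | hx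
      · have := pow_le_one₀ (n := n) (abs_nonneg x) hx
        nlinarith [pow_nonneg (abs_nonneg x) 4, sq_nonneg (x^2)]
      · have h4 : |x|^n ≤ |x|^4 := pow_le_pow_right₀ hx.le hn
        have : |x|^4 = x^4 := by rw [← abs_pow, abs_of_nonneg (by positivity)]
        nlinarith
    have e1 : Real.exp (-x^2/2) = Real.exp (-(x^2/4)) * Real.exp (-(x^2/4)) := by
      rw [← Real.exp_add]; ring_nf
    have e2 : Real.exp (-(x^2/4)) ≤ 1 := Real.exp_le_one_iff.2 (neg_nonpos.2 (by positivity))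
    have e3 : (x^2/4)^2 * Real.exp (-(x^2/4)) ≤ 2 := by
      have h0 : (0:ℝ) ≤ x^2/4 := by positivity
      have := Real.pow_div_factorial_le_exp (x^2/4) h0 2
      rw [Real.exp_neg]
      rw [div_le_iff₀ (by positivity)] at this
      rw [mul_inv_le_iff₀' (Real.exp_pos _)]
      norm_num [Nat.factorial] at this ⊢
      linarith
    have e4 : Real.exp (-(4:ℝ)⁻¹ * x^2) = Real.exp (-(x^2/4)) := by ring_nf
    have hp := Real.exp_pos (-(x^2/4))
    rw [e1, e4]
    calc |x|^n * (Real.exp (-(x^2/4)) * Real.exp (-(x^2/4)))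
        ≤ (1 + x^4) * (Real.exp (-(x^2/4)) * Real.exp (-(x^2/4))) := by nlinarith
      _ ≤ 33 * Real.exp (-(x^2/4)) := by nlinarith
  refine Integrable.mono' ((integrable_exp_neg_mul_sq (by norm_num : (0:ℝ) < 4⁻¹)).const_mul 33)
    ?_ (Filter.Eventually.of_forall fun x => ?_)
  · exact ((continuous_pow n).mul
      (Real.continuous_exp.comp (by continuity))).aestronglyMeasurable
  · rw [Real.norm_eq_abs, abs_mul, abs_of_pos (Real.exp_pos _), abs_pow]
    exact key x

lemma lebesgue_m1 : ∫ x : ℝ, x * Real.exp (-x^2/2) = 0 := by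
  have hder : ∀ x : ℝ, HasDerivAt (fun x : ℝ => -Real.exp (-x^2/2))
      (x * Real.exp (-x^2/2)) x := by
    intro x
    have h1 : HasDerivAt (fun x : ℝ => -x^2/2) (-x) x := by
      have := ((hasDerivAt_pow 2 x).neg.div_const 2)
      refine this.congr_deriv ?_
      push_cast
      ring
    have := h1.exp.neg
    refine this.congr_deriv ?_
    ring
  have hint : Integrable (fun x : ℝ => x * Real.exp (-x^2/2)) := by
    simpa using integrable_pow_gauss (n := 1) (by norm_num)
  have hintf : Integrable (fun x : ℝ => -Real.exp (-x^2/2)) := by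
    have : Integrable (fun x : ℝ => x ^ 0 * Real.exp (-x^2/2)) :=
      integrable_pow_gauss (by norm_num)
    exact (show Integrable (fun x : ℝ => Real.exp (-x^2/2)) by simpa using this).neg
  exact integral_eq_zero_of_hasDerivAt_of_integrable hder hint hintf

lemma lebesgue_m0 : ∫ x : ℝ, Real.exp (-x^2/2) = Real.sqrt (2*π) := by
  have := integral_gaussian (1/2 : ℝ)
  have h1 : ∀ x : ℝ, Real.exp (-(1/2 : ℝ) * x^2) = Real.exp (-x^2/2) := by
    intro x; ring_nf
  rw [show (π / (1/2 : ℝ)) = 2*π by ring] at this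
  rw [← this]
  exact integral_congr_ae (Filter.EventuallyEq.of_eq (funext fun x => (h1 x).symm))

lemma lebesgue_m2 : ∫ x : ℝ, x^2 * Real.exp (-x^2/2) = Real.sqrt (2*π) := by
  have hder : ∀ x : ℝ, HasDerivAt (fun x : ℝ => -(x * Real.exp (-x^2/2)))
      ((x^2 - 1) * Real.exp (-x^2/2)) x := by
    intro x
    have h1 : HasDerivAt (fun x : ℝ => -x^2/2) (-x) x := by
      have := ((hasDerivAt_pow 2 x).neg.div_const 2)
      refine this.congr_deriv ?_
      push_cast
      ring
    have h2 := (hasDerivAt_id x).mul h1.exp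
    have := h2.neg
    refine this.congr_deriv ?_
    simp only [id]
    ring
  have hintf : Integrable (fun x : ℝ => -(x * Real.exp (-x^2/2))) := by
    have : Integrable (fun x : ℝ => x ^ 1 * Real.exp (-x^2/2)) :=
      integrable_pow_gauss (by norm_num)
    exact (show Integrable (fun x : ℝ => x * Real.exp (-x^2/2)) by simpa using this).neg
  have hint2 : Integrable (fun x : ℝ => x^2 * Real.exp (-x^2/2)) :=
    integrable_pow_gauss (by norm_num)
  have hint0 : Integrable (fun x : ℝ => Real.exp (-x^2/2)) := by
    have : Integrable (fun x : ℝ => x ^ 0 * Real.exp (-x^2/2)) :=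
      integrable_pow_gauss (by norm_num)
    simpa using this
  have hint : Integrable (fun x : ℝ => (x^2 - 1) * Real.exp (-x^2/2)) := by
    refine (hint2.sub hint0).congr (Filter.EventuallyEq.of_eq (funext fun x => ?_))
    simp only [Pi.sub_apply]
    ring
  have h0 := integral_eq_zero_of_hasDerivAt_of_integrable hder hint hintf
  have hsplit : ∫ x : ℝ, (x^2 - 1) * Real.exp (-x^2/2)
      = (∫ x : ℝ, x^2 * Real.exp (-x^2/2)) - ∫ x : ℝ, Real.exp (-x^2/2) := by
    rw [← integral_sub hint2 hint0]
    refine integral_congr_ae (Filter.EventuallyEq.of_eq (funext fun x => ?_))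
    ring
  rw [hsplit] at h0
  rw [lebesgue_m0] at h0
  linarith


lemma sqrt2pi_pos : 0 < Real.sqrt (2*π) := Real.sqrt_pos.2 (by positivity)

lemma gauss_integrable_pow {n : ℕ} (hn : n ≤ 4) :
    Integrable (fun x : ℝ => x ^ n) (gaussianReal 0 1) := by
  rw [gauss_integrable_iff]
  have := (integrable_pow_gauss hn).const_mul (Real.sqrt (2*π))⁻¹
  refine this.congr (Filter.EventuallyEq.of_eq (funext fun x => ?_))
  rw [pdf_eq]; ring

lemma gauss_integrable_abs3 :
    Integrable (fun x : ℝ => |x| ^ 3) (gaussianReal 0 1) := by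
  rw [gauss_integrable_iff]
  have h3 : Integrable (fun x : ℝ => |x ^ 3 * Real.exp (-x^2/2)|) :=
    (integrable_pow_gauss (by norm_num : 3 ≤ 4)).abs
  have := h3.const_mul (Real.sqrt (2*π))⁻¹
  refine this.congr (Filter.EventuallyEq.of_eq (funext fun x => ?_))
  rw [pdf_eq, abs_mul, abs_of_pos (Real.exp_pos _), abs_pow]
  ring

lemma gauss_m1 : ∫ x, x ∂(gaussianReal 0 1) = 0 := by
  rw [gauss_integral_eq]
  have he : (fun x : ℝ => gaussianPDFReal 0 1 x * x)
      = fun x => (Real.sqrt (2*π))⁻¹ * (x * Real.exp (-x^2/2)) := by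
    funext x; rw [pdf_eq]; ring
  rw [he, MeasureTheory.integral_const_mul, lebesgue_m1, mul_zero]

lemma gauss_m2 : ∫ x, x^2 ∂(gaussianReal 0 1) = 1 := by
  rw [gauss_integral_eq]
  have he : (fun x : ℝ => gaussianPDFReal 0 1 x * x^2)
      = fun x => (Real.sqrt (2*π))⁻¹ * (x^2 * Real.exp (-x^2/2)) := by
    funext x; rw [pdf_eq]; ring
  rw [he, MeasureTheory.integral_const_mul, lebesgue_m2, inv_mul_cancel₀ sqrt2pi_pos.ne']


end S3

/-- With `s_τ = s₀ exp(−τ/P + √(2τ/P) G)`, `G ~ N(0,1)` and `s₀ ≥ 0` fixed, the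
(one-sided) derivative of `E[exp(−s_τ/2)]` in `τ` at `τ = 0` equals
`(1/(4P)) exp(−s₀/2) s₀²`. -/
theorem stmt3 (P s₀ : ℝ) (hP : 0 < P) (hs₀ : 0 ≤ s₀) :
    HasDerivWithinAt
      (fun τ : ℝ => ∫ g : ℝ,
        Real.exp (-(s₀ * Real.exp (-(τ / P) + Real.sqrt (2 * τ / P) * g)) / 2)
          ∂(gaussianReal 0 1))
      ((1 / (4 * P)) * Real.exp (-s₀ / 2) * s₀ ^ 2)
      (Set.Ici (0 : ℝ)) 0 := by
  have hPne : P ≠ 0 := hP.ne'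
  set a : ℝ := s₀ / 2 with ha
  have ha0 : 0 ≤ a := by positivity
  set γ : Measure ℝ := gaussianReal 0 1 with hγ
  set L : ℝ := (1 / (4 * P)) * Real.exp (-s₀ / 2) * s₀ ^ 2 with hL
  have hfun : (fun τ : ℝ => ∫ g : ℝ,
        Real.exp (-(s₀ * Real.exp (-(τ / P) + Real.sqrt (2 * τ / P) * g)) / 2) ∂γ)
      = fun τ : ℝ => ∫ g : ℝ, S3.h a (-(τ / P) + Real.sqrt (2 * τ / P) * g) ∂γ := by
    funext τ
    refine integral_congr_ae (Filter.EventuallyEq.of_eq (funext fun g => ?_))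
    simp only [S3.h]
    congr 1
    rw [ha]
    ring
  rw [hfun]
  set F : ℝ → ℝ := fun τ : ℝ => ∫ g : ℝ, S3.h a (-(τ / P) + Real.sqrt (2 * τ / P) * g) ∂γ
    with hF
  -- value at 0
  have hF0 : F 0 = S3.h a 0 := by
    simp only [hF]
    have he : (fun g : ℝ => S3.h a (-(0 / P) + Real.sqrt (2 * 0 / P) * g))
        = fun _ : ℝ => S3.h a 0 := by
      funext g; norm_num
    simp only [he]
    simp [hγ]
  -- basic integrability facts
  have iId : Integrable (fun g : ℝ => g) γ := by
    have := S3.gauss_integrable_pow (n := 1) (by norm_num)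
    simpa [hγ] using this
  have iSq : Integrable (fun g : ℝ => g ^ 2) γ := by
    have := S3.gauss_integrable_pow (n := 2) (by norm_num)
    simpa [hγ] using this
  have iA3 : Integrable (fun g : ℝ => |g| ^ 3) γ := by
    have := S3.gauss_integrable_abs3
    simpa [hγ] using this
  set c3 : ℝ := ∫ g, |g| ^ 3 ∂γ with hc3def
  have hc3 : 0 ≤ c3 := integral_nonneg fun g => by positivity
  -- the relation between L and the Taylor coefficients
  have hLP : S3.h2 a 0 - S3.h1 a 0 = L * P := by
    simp only [S3.h2, S3.h1, S3.h, Real.exp_zero, mul_one, hL]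
    rw [ha, neg_div]
    field_simp
    ring
  -- bound function
  set B : ℝ → ℝ := fun τ => (|S3.h2 a 0| / (2 * P ^ 2)) * τ + (52 / P ^ 3) * τ ^ 2
      + (104 * c3 / P) * Real.sqrt (2 * τ / P) with hB
  -- key estimate
  have key : ∀ τ : ℝ, 0 < τ → |F τ - F 0 - L * τ| ≤ τ * B τ := by
    intro τ hτ
    set c : ℝ := Real.sqrt (2 * τ / P) with hc
    have hc0 : 0 ≤ c := Real.sqrt_nonneg _
    have hc2 : c ^ 2 = 2 * τ / P := Real.sq_sqrt (by positivity)
    set k : ℝ := -(τ / P) with hk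
    have hkabs : |k| = τ / P := by rw [hk, abs_neg, abs_of_nonneg (by positivity)]
    -- integrability for this τ
    have iH : Integrable (fun g : ℝ => S3.h a (k + c * g)) γ := by
      refine Integrable.mono' (integrable_const 1) ?_ (Filter.Eventually.of_forall fun g => ?_)
      · refine Continuous.aestronglyMeasurable ?_
        simp only [S3.h]
        exact Real.continuous_exp.comp
          ((continuous_const.mul (Real.continuous_exp.comp (continuous_const.add
            (continuous_const.mul continuous_id)))).neg)
      · rw [Real.norm_eq_abs, S3.h, abs_of_pos (Real.exp_pos _)]
        exact Real.exp_le_one_iff.2 (neg_nonpos.2 (by positivity))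
    have iX : Integrable (fun g : ℝ => k + c * g) γ :=
      (integrable_const k).add (iId.const_mul c)
    have iX2 : Integrable (fun g : ℝ => (k + c * g) ^ 2) γ := by
      have base : Integrable (fun g : ℝ => k ^ 2 + ((2 * k * c) * g + c ^ 2 * g ^ 2)) γ :=
        (integrable_const _).add ((iId.const_mul _).add (iSq.const_mul _))
      exact base.congr (Filter.EventuallyEq.of_eq (funext fun g => by ring))
    have iQ : Integrable (fun g : ℝ => S3.h a (k + c * g) - S3.h a 0
        - S3.h1 a 0 * (k + c * g) - S3.h2 a 0 * ((k + c * g) ^ 2 / 2)) γ :=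
      ((iH.sub (integrable_const _)).sub (iX.const_mul _)).sub
        ((iX2.div_const 2).const_mul _)
    -- first and second moments of X
    have hIX : ∫ g, (k + c * g) ∂γ = k := by
      rw [integral_add (integrable_const k) (iId.const_mul c),
        MeasureTheory.integral_const_mul, hγ, S3.gauss_m1, mul_zero, add_zero]
      simp
    have hIX2 : ∫ g, (k + c * g) ^ 2 ∂γ = k ^ 2 + c ^ 2 := by
      have he : (fun g : ℝ => (k + c * g) ^ 2)
          = fun g : ℝ => k ^ 2 + ((2 * k * c) * g + c ^ 2 * g ^ 2) := funext fun g => by ring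
      have e3 : Integrable (fun g : ℝ => (2 * k * c) * g + c ^ 2 * g ^ 2) γ := by
        exact (iId.const_mul _).add (iSq.const_mul _)
      have e1 : ∫ g, ((2 * k * c) * g + c ^ 2 * g ^ 2) ∂γ = c ^ 2 := by
        rw [integral_add (iId.const_mul _) (iSq.const_mul _),
          MeasureTheory.integral_const_mul, MeasureTheory.integral_const_mul, hγ,
          S3.gauss_m1, S3.gauss_m2, mul_zero, mul_one, zero_add]
      rw [he, integral_add (integrable_const _) e3, e1]
      simp
    -- decomposition of F τ
    have hFτ : F τ = S3.h a 0 + S3.h1 a 0 * k + S3.h2 a 0 * ((k ^ 2 + c ^ 2) / 2)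
        + ∫ g, (S3.h a (k + c * g) - S3.h a 0 - S3.h1 a 0 * (k + c * g)
            - S3.h2 a 0 * ((k + c * g) ^ 2 / 2)) ∂γ := by
      have he : (fun g : ℝ => S3.h a (-(τ / P) + Real.sqrt (2 * τ / P) * g))
          = fun g : ℝ => S3.h a 0 + (S3.h1 a 0 * (k + c * g)
            + (S3.h2 a 0 * ((k + c * g) ^ 2 / 2)
            + (S3.h a (k + c * g) - S3.h a 0 - S3.h1 a 0 * (k + c * g)
              - S3.h2 a 0 * ((k + c * g) ^ 2 / 2)))) := by
        funext g
        rw [← hc, ← hk]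
        ring
      have j2 : Integrable (fun g : ℝ => S3.h2 a 0 * ((k + c * g) ^ 2 / 2)
          + (S3.h a (k + c * g) - S3.h a 0 - S3.h1 a 0 * (k + c * g)
            - S3.h2 a 0 * ((k + c * g) ^ 2 / 2))) γ := by
        exact ((iX2.div_const 2).const_mul _).add iQ
      have j1 : Integrable (fun g : ℝ => S3.h1 a 0 * (k + c * g)
          + (S3.h2 a 0 * ((k + c * g) ^ 2 / 2)
          + (S3.h a (k + c * g) - S3.h a 0 - S3.h1 a 0 * (k + c * g)
            - S3.h2 a 0 * ((k + c * g) ^ 2 / 2)))) γ := by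
        exact (iX.const_mul _).add j2
      simp only [hF]
      rw [he, integral_add (integrable_const _) j1,
        integral_add (iX.const_mul _) j2,
        integral_add ((iX2.div_const 2).const_mul _) iQ,
        MeasureTheory.integral_const_mul, MeasureTheory.integral_const_mul]
      have hdiv : ∫ g, (k + c * g) ^ 2 / 2 ∂γ = (k ^ 2 + c ^ 2) / 2 := by
        rw [integral_div, hIX2]
      rw [hdiv, hIX]
      simp [hγ]
      ring
    -- bound on the remainder integral
    have hRb : |∫ g, (S3.h a (k + c * g) - S3.h a 0 - S3.h1 a 0 * (k + c * g)
        - S3.h2 a 0 * ((k + c * g) ^ 2 / 2)) ∂γ| ≤ 52 * ((τ / P) ^ 3 + c ^ 3 * c3) := by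
      have hq : ∀ g : ℝ, |S3.h a (k + c * g) - S3.h a 0 - S3.h1 a 0 * (k + c * g)
          - S3.h2 a 0 * ((k + c * g) ^ 2 / 2)| ≤ 13 * (4 * ((τ / P) ^ 3 + c ^ 3 * |g| ^ 3)) := by
        intro g
        have ht := S3.taylor_bound a ha0 (k + c * g)
        have he : S3.h a (k + c * g) - S3.h a 0 - S3.h1 a 0 * (k + c * g)
            - S3.h2 a 0 * ((k + c * g) ^ 2 / 2)
            = S3.h a (k + c * g) - (S3.h a 0 + S3.h1 a 0 * (k + c * g)
              + S3.h2 a 0 * ((k + c * g) ^ 2 / 2)) := by ring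
        rw [he]
        refine ht.trans ?_
        have h1 : |k + c * g| ≤ τ / P + c * |g| := by
          calc |k + c * g| ≤ |k| + |c * g| := abs_add_le _ _
            _ = τ / P + c * |g| := by rw [hkabs, abs_mul, abs_of_nonneg hc0]
        have h2 : |k + c * g| ^ 3 ≤ (τ / P + c * |g|) ^ 3 :=
          pow_le_pow_left₀ (abs_nonneg _) h1 3
        have hx : (0:ℝ) ≤ τ / P := by positivity
        have hy : (0:ℝ) ≤ c * |g| := mul_nonneg hc0 (abs_nonneg g)
        have h3 : (τ / P + c * |g|) ^ 3 ≤ 4 * ((τ / P) ^ 3 + (c * |g|) ^ 3) := by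
          nlinarith [mul_nonneg (sq_nonneg (τ / P - c * |g|)) (add_nonneg hx hy)]
        have h4 : (c * |g|) ^ 3 = c ^ 3 * |g| ^ 3 := by ring
        have h5 := h2.trans h3
        rw [h4] at h5
        linarith
      have idom : Integrable (fun g : ℝ => 13 * (4 * ((τ / P) ^ 3 + c ^ 3 * |g| ^ 3))) γ :=
        (((integrable_const _).add (iA3.const_mul _)).const_mul 4).const_mul 13
      calc |∫ g, (S3.h a (k + c * g) - S3.h a 0 - S3.h1 a 0 * (k + c * g)
            - S3.h2 a 0 * ((k + c * g) ^ 2 / 2)) ∂γ|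
          ≤ ∫ g, |S3.h a (k + c * g) - S3.h a 0 - S3.h1 a 0 * (k + c * g)
            - S3.h2 a 0 * ((k + c * g) ^ 2 / 2)| ∂γ := by
            exact norm_integral_le_integral_norm
              (μ := γ) (fun g : ℝ => S3.h a (k + c * g) - S3.h a 0 - S3.h1 a 0 * (k + c * g)
                - S3.h2 a 0 * ((k + c * g) ^ 2 / 2))
        _ ≤ ∫ g, 13 * (4 * ((τ / P) ^ 3 + c ^ 3 * |g| ^ 3)) ∂γ :=
            integral_mono_of_nonneg (Filter.Eventually.of_forall fun g => abs_nonneg _)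
              idom (Filter.Eventually.of_forall fun g => hq g)
        _ = 52 * ((τ / P) ^ 3 + c ^ 3 * c3) := by
            rw [MeasureTheory.integral_const_mul, MeasureTheory.integral_const_mul,
              integral_add (integrable_const _) (iA3.const_mul _),
              MeasureTheory.integral_const_mul]
            simp [hγ, hc3def]
            ring
    -- assemble
    have hmain : F τ - F 0 - L * τ = S3.h2 a 0 * ((τ / P) ^ 2 / 2)
        + ∫ g, (S3.h a (k + c * g) - S3.h a 0 - S3.h1 a 0 * (k + c * g)
            - S3.h2 a 0 * ((k + c * g) ^ 2 / 2)) ∂γ := by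
      rw [hFτ, hF0]
      have hk2 : k = -(τ / P) := hk
      have hLP' : S3.h1 a 0 = S3.h2 a 0 - L * P := by linarith [hLP]
      rw [hk2, hLP', hc2]
      field_simp
      ring
    rw [hmain]
    have hc3' : c ^ 3 = (2 * τ / P) * c := by
      rw [pow_succ, hc2]
    calc |S3.h2 a 0 * ((τ / P) ^ 2 / 2) + ∫ g, (S3.h a (k + c * g) - S3.h a 0
          - S3.h1 a 0 * (k + c * g) - S3.h2 a 0 * ((k + c * g) ^ 2 / 2)) ∂γ|
        ≤ |S3.h2 a 0 * ((τ / P) ^ 2 / 2)| + |∫ g, (S3.h a (k + c * g) - S3.h a 0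
          - S3.h1 a 0 * (k + c * g) - S3.h2 a 0 * ((k + c * g) ^ 2 / 2)) ∂γ| := abs_add_le _ _
      _ ≤ |S3.h2 a 0| * ((τ / P) ^ 2 / 2) + 52 * ((τ / P) ^ 3 + c ^ 3 * c3) := by
          refine add_le_add ?_ hRb
          rw [abs_mul, abs_of_nonneg (by positivity : (0:ℝ) ≤ (τ / P) ^ 2 / 2)]
      _ = τ * B τ := by
          rw [hB]
          simp only [← hc]
          rw [hc3']
          field_simp
          ring
  -- conclude via the slope characterization
  rw [hasDerivWithinAt_iff_tendsto_slope]
  rw [Set.Ici_sdiff_left]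
  have hBcont : Continuous B := by
    rw [hB]
    refine ((continuous_const.mul continuous_id).add
      (continuous_const.mul (continuous_pow 2))).add
      (continuous_const.mul (Real.continuous_sqrt.comp ?_))
    exact (continuous_const.mul continuous_id).div_const P
  have hB0 : B 0 = 0 := by
    rw [hB]
    norm_num
  have hBt : Tendsto B (𝓝[Set.Ioi (0:ℝ)] 0) (𝓝 0) := by
    have := hBcont.continuousAt (x := (0:ℝ))
    rw [ContinuousAt, hB0] at this
    exact this.mono_left nhdsWithin_le_nhds
  have h1 : Tendsto (fun τ => slope F 0 τ - L) (𝓝[Set.Ioi (0:ℝ)] 0) (𝓝 0) := by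
    refine squeeze_zero_norm' ?_ hBt
    filter_upwards [self_mem_nhdsWithin] with τ hτ
    have hτ0 : (0:ℝ) < τ := hτ
    rw [slope_def_field, Real.norm_eq_abs]
    have he : (F τ - F 0) / (τ - 0) - L = (F τ - F 0 - L * τ) / τ := by
      rw [sub_zero, sub_div (F τ - F 0) (L * τ), mul_div_cancel_right₀ _ hτ0.ne']
    rw [he, abs_div, abs_of_pos hτ0, div_le_iff₀ hτ0]
    calc |F τ - F 0 - L * τ| ≤ τ * B τ := key τ hτ0
      _ = B τ * τ := by ring
  have h2 : Tendsto (fun _ : ℝ => L) (𝓝[Set.Ioi (0:ℝ)] 0) (𝓝 L) := tendsto_const_nhds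
  have := h1.add h2
  simp only [sub_add_cancel, zero_add] at this
  exact this
end

section
/- Let Φ̄ be a (P+1)×(P+1) symmetric positive semidefinite matrix partitioned into blocks Φ̄_pp ∈ ℝ^{P×P}, Φ̄_pκ ∈ ℝ^{P}, Φ̄_κκ ∈ ℝ, let β > 0, A = (1/β)I_P + Φ̄_pp, and Y ∈ ℝ^P. Then for all κ ∈ ℝ, ∫_{ℝ^P} exp(−(1/(2β))‖p‖² + i pᵀY − (1/2) vᵀ Φ̄ v) dp, with v = (p, κ), equals (2π)^{P/2} det(A)^{-1/2} exp(−(1/2) Yᵀ A^{-1} Y − i κ Φ̄_κp A^{-1} Y − (1/2) κ² (Φ̄_κκ − Φ̄_κp A^{-1} Φ̄_pκ)). -/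
open MeasureTheory Matrix

/-- Closed-form kernel-method partition function. Let `Φ̄` be a `(P+1)×(P+1)` symmetric
PSD matrix with blocks `Φpp, Φpκ, Φκκ`, `β > 0`, `A = β⁻¹ I + Φpp`, `Y ∈ ℝ^P`. Then for
all `κ ∈ ℝ`, `∫ exp(−(1/(2β))‖p‖² + ipᵀY − ½ vᵀΦ̄v) dp` with `v = (p, κ)` equals
`(2π)^{P/2} det(A)^{-1/2} exp(−½YᵀA⁻¹Y − iκ Φ̄κp A⁻¹Y − ½κ²(Φ̄κκ − Φ̄κp A⁻¹ Φ̄pκ))`. -/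
theorem stmt5 (P : ℕ) (Φpp : Matrix (Fin P) (Fin P) ℝ) (Φpκ : Fin P → ℝ) (Φκκ : ℝ)
    (hsymm : Φpp.IsSymm)
    (hPSD : ∀ (p : Fin P → ℝ) (κ : ℝ),
      0 ≤ p ⬝ᵥ Φpp *ᵥ p + 2 * κ * (p ⬝ᵥ Φpκ) + κ ^ 2 * Φκκ)
    (β : ℝ) (hβ : 0 < β) (Y : Fin P → ℝ)
    (A : Matrix (Fin P) (Fin P) ℝ)
    (hA : A = β⁻¹ • (1 : Matrix (Fin P) (Fin P) ℝ) + Φpp) :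
    ∀ κ : ℝ,
      (∫ p : Fin P → ℝ,
        Complex.exp (Complex.ofReal (-(1 / (2 * β)) * (p ⬝ᵥ p))
          + Complex.I * Complex.ofReal (p ⬝ᵥ Y)
          - Complex.ofReal ((1 / 2) *
              (p ⬝ᵥ Φpp *ᵥ p + 2 * κ * (p ⬝ᵥ Φpκ) + κ ^ 2 * Φκκ))))
      = Complex.ofReal ((2 * Real.pi) ^ ((P : ℝ) / 2) * A.det ^ (-(1 : ℝ) / 2)) *
        Complex.exp (Complex.ofReal (-(1 / 2) * (Y ⬝ᵥ A⁻¹ *ᵥ Y))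
          - Complex.I * Complex.ofReal (κ * (Φpκ ⬝ᵥ A⁻¹ *ᵥ Y))
          - Complex.ofReal ((1 / 2) * κ ^ 2 * (Φκκ - Φpκ ⬝ᵥ A⁻¹ *ᵥ Φpκ))) := by
  intro κ
  classical
  -- Positivity facts
  have hΦpsd : ∀ x : Fin P → ℝ, 0 ≤ x ⬝ᵥ Φpp *ᵥ x := fun x => by
    have := hPSD x 0; simpa using this
  have hAsymm : Aᵀ = A := by
    rw [hA, transpose_add, transpose_smul, transpose_one, hsymm.eq]
  have hApos : A.PosDef := by
    refine Matrix.posDef_iff_dotProduct_mulVec.mpr ⟨?_, fun x hx => ?_⟩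
    · show Aᴴ = A
      ext i j
      rw [Matrix.conjTranspose_apply, star_trivial]
      exact congrFun (congrFun hAsymm i) j
    · have hx2 : 0 < x ⬝ᵥ x := by
        rcases (dotProduct_self_eq_zero (v := x)).not.mpr hx with h
        have : 0 ≤ x ⬝ᵥ x := by
          simpa [dotProduct] using Finset.sum_nonneg fun i _ => mul_self_nonneg (x i)
        exact lt_of_le_of_ne this (Ne.symm h)
      have : star x = x := by simp
      rw [this, hA, add_mulVec, dotProduct_add, smul_mulVec, one_mulVec,
        dotProduct_smul, smul_eq_mul]
      have : 0 < β⁻¹ * (x ⬝ᵥ x) := by positivity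
      linarith [hΦpsd x]
  have hApsd := hApos.posSemidef
  open scoped MatrixOrder in set B := CFC.sqrt A with hBdef
  open scoped MatrixOrder in have hBpsd : B.PosSemidef := (CFC.sqrt_nonneg A).posSemidef
  open scoped MatrixOrder in have hBB : B * B = A := CFC.sqrt_mul_sqrt_self A hApsd.nonneg
  have hBsymm : Bᵀ = B := by
    ext i j
    have h := congrFun (congrFun hBpsd.1 j) i
    rw [Matrix.conjTranspose_apply, star_trivial] at h
    exact h.symm
  have hdetA : 0 < A.det := hApos.det_pos
  have hdetB2 : B.det * B.det = A.det := by rw [← det_mul, hBB]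
  have hdetBnn : 0 ≤ B.det := by
    rw [hBpsd.1.det_eq_prod_eigenvalues]
    exact Finset.prod_nonneg fun i _ => by
      simpa using hBpsd.eigenvalues_nonneg i
  have hdetB : 0 < B.det := by
    rcases lt_or_eq_of_le hdetBnn with h | h
    · exact h
    · exfalso; rw [← h] at hdetB2; simp at hdetB2; rw [← hdetB2] at hdetA; simp at hdetA
  have hBunit : IsUnit B.det := (isUnit_iff_ne_zero).mpr hdetB.ne'
  set C := B⁻¹ with hCdef
  have hCB : C * B = 1 := nonsing_inv_mul B hBunit
  have hBC : B * C = 1 := mul_nonsing_inv B hBunit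
  have hCsymm : Cᵀ = C := by rw [hCdef, transpose_nonsing_inv, hBsymm]
  have hCC : C * C = A⁻¹ := by rw [hCdef, ← Matrix.mul_inv_rev, hBB]
  have hdetC : C.det = B.det⁻¹ := by rw [hCdef, det_nonsing_inv, Ring.inverse_eq_inv']
  have hdetCpos : 0 < C.det := by rw [hdetC]; positivity
  have hCinv : Invertible C := C.invertibleOfIsUnitDet ((isUnit_iff_ne_zero).mpr hdetCpos.ne')
  -- complex data
  set w : Fin P → ℂ := fun i => Complex.I * (Y i : ℂ) - (κ : ℂ) * (Φpκ i : ℂ) with hw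
  set c : Fin P → ℂ := fun i => ∑ j, ((C i j : ℝ) : ℂ) * w j with hc
  have hpAp : ∀ p : Fin P → ℝ, p ⬝ᵥ A *ᵥ p = β⁻¹ * (p ⬝ᵥ p) + p ⬝ᵥ Φpp *ᵥ p := fun p => by
    rw [hA, add_mulVec, dotProduct_add, smul_mulVec, one_mulVec,
      dotProduct_smul, smul_eq_mul]
  have hl : ∀ p : Fin P → ℝ, ∑ i, w i * (p i : ℂ)
      = Complex.I * ((p ⬝ᵥ Y : ℝ) : ℂ) - (κ : ℂ) * ((p ⬝ᵥ Φpκ : ℝ) : ℂ) := by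
    intro p
    simp only [hw, sub_mul, Finset.sum_sub_distrib, dotProduct]
    push_cast
    rw [Finset.mul_sum, Finset.mul_sum]
    congr 1 <;> exact Finset.sum_congr rfl fun i _ => by ring
  have hintegrand : ∀ p : Fin P → ℝ,
      Complex.exp (Complex.ofReal (-(1 / (2 * β)) * (p ⬝ᵥ p))
          + Complex.I * Complex.ofReal (p ⬝ᵥ Y)
          - Complex.ofReal ((1 / 2) *
              (p ⬝ᵥ Φpp *ᵥ p + 2 * κ * (p ⬝ᵥ Φpκ) + κ ^ 2 * Φκκ)))
      = Complex.exp (-(1/2 : ℂ) * ((p ⬝ᵥ A *ᵥ p : ℝ) : ℂ) + ∑ i, w i * (p i : ℂ))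
          * Complex.exp (-(((1/2) * κ^2 * Φκκ : ℝ) : ℂ)) := by
    intro p
    rw [← Complex.exp_add]
    congr 1
    rw [hl p, hpAp p]
    push_cast
    have hβ' : (β : ℂ) ≠ 0 := by exact_mod_cast hβ.ne'
    field_simp
    ring
  simp_rw [hintegrand]
  rw [integral_mul_const]
  -- change of variables
  have key : ∀ g : (Fin P → ℝ) → ℂ, ∫ p, g p = C.det • ∫ q, g (C *ᵥ q) := by
    intro g
    let e : (Fin P → ℝ) ≃ₗ[ℝ] (Fin P → ℝ) := C.toLinearEquiv' hCinv
    let eM : (Fin P → ℝ) ≃ᵐ (Fin P → ℝ) :=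
      e.toContinuousLinearEquiv.toHomeomorph.toMeasurableEquiv
    have hcoe : (⇑eM : (Fin P → ℝ) → (Fin P → ℝ)) = ⇑(Matrix.toLin' C) := by
      funext x; rfl
    have hdet : LinearMap.det (Matrix.toLin' C) = C.det := LinearMap.det_toLin' C
    have hmap : Measure.map eM volume = ENNReal.ofReal (|C.det|⁻¹) • volume := by
      rw [show (Measure.map eM volume) = Measure.map (Matrix.toLin' C) volume from by
        rw [hcoe]]
      rw [Real.map_linearMap_volume_pi_eq_smul_volume_pi (by rw [hdet]; exact hdetCpos.ne')]
      rw [hdet, abs_inv]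
    have h1 : ∫ q, g (eM q) = ∫ p, g p ∂(Measure.map eM volume) :=
      (integral_map_equiv eM g).symm
    rw [hmap, integral_smul_measure] at h1
    have h2 : ∀ q, eM q = C *ᵥ q := fun q => by
      rw [show eM q = Matrix.toLin' C q from congrFun hcoe q, Matrix.toLin'_apply]
    simp only [h2] at h1
    rw [h1, ENNReal.toReal_ofReal (by positivity), smul_smul, abs_of_pos hdetCpos,
      mul_inv_cancel₀ hdetCpos.ne', one_smul]
  rw [key]
  -- simplify substituted integrand
  have hquad : ∀ q : Fin P → ℝ, (C *ᵥ q) ⬝ᵥ A *ᵥ (C *ᵥ q) = q ⬝ᵥ q := by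
    intro q
    have hAC : A * C = B := by rw [← hBB, Matrix.mul_assoc, hBC, Matrix.mul_one]
    rw [mulVec_mulVec, hAC, dotProduct_mulVec, ← mulVec_transpose, hBsymm,
      mulVec_mulVec, hBC, one_mulVec]
  have hlin2 : ∀ q : Fin P → ℝ, ∑ i, w i * (((C *ᵥ q) i : ℝ) : ℂ) = ∑ i, c i * (q i : ℂ) := by
    intro q
    simp only [hc, Matrix.mulVec, dotProduct, Finset.sum_mul]
    push_cast
    rw [Finset.sum_comm]
    refine Finset.sum_congr rfl fun j _ => ?_
    rw [Finset.mul_sum]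
    refine Finset.sum_congr rfl fun i _ => ?_
    rw [show C j i = C i j from (congrFun (congrFun hCsymm i) j : Cᵀ i j = C i j)]
    ring
  simp_rw [hquad, hlin2]
  have hqq : ∀ q : Fin P → ℝ, ((q ⬝ᵥ q : ℝ) : ℂ) = ∑ i, (q i : ℂ)^2 := by
    intro q
    push_cast [dotProduct]
    exact Finset.sum_congr rfl fun i _ => by ring
  simp_rw [hqq]
  rw [GaussianFourier.integral_cexp_neg_mul_sum_add (b := (1/2 : ℂ)) (by norm_num) c]
  -- the sum of squares
  set Mc : Matrix (Fin P) (Fin P) ℂ := (A⁻¹).map Complex.ofReal with hMc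
  have hcast : ∀ x y : Fin P → ℝ,
      (fun i => ((x i : ℝ) : ℂ)) ⬝ᵥ Mc *ᵥ (fun i => ((y i : ℝ) : ℂ))
        = ((x ⬝ᵥ A⁻¹ *ᵥ y : ℝ) : ℂ) := by
    intro x y
    simp only [dotProduct, Matrix.mulVec, Matrix.map_apply, hMc]
    push_cast
    ring
  have hMsymm : (A⁻¹)ᵀ = A⁻¹ := by rw [transpose_nonsing_inv, hAsymm]
  have hcross : Y ⬝ᵥ A⁻¹ *ᵥ Φpκ = Φpκ ⬝ᵥ A⁻¹ *ᵥ Y := by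
    rw [dotProduct_mulVec, ← mulVec_transpose, hMsymm, dotProduct_comm]
  set Cc : Matrix (Fin P) (Fin P) ℂ := C.map Complex.ofReal with hCc
  have hcvec : c = Cc *ᵥ w := funext fun i => by
    simp [hc, hCc, Matrix.mulVec, dotProduct, Matrix.map_apply]
  have hCcsymm : Ccᵀ = Cc := by rw [hCc, ← Matrix.transpose_map, hCsymm]
  have hCcCc : Cc * Cc = Mc := by
    ext i j
    simp only [Matrix.mul_apply, Matrix.map_apply, hCc, hMc, ← hCC]
    push_cast
    rfl
  have hsum : ∑ i, c i ^ 2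
      = -((Y ⬝ᵥ A⁻¹ *ᵥ Y : ℝ) : ℂ)
        - 2 * Complex.I * (κ : ℂ) * ((Φpκ ⬝ᵥ A⁻¹ *ᵥ Y : ℝ) : ℂ)
        + (κ : ℂ)^2 * ((Φpκ ⬝ᵥ A⁻¹ *ᵥ Φpκ : ℝ) : ℂ) := by
    have h1 : ∑ i, c i ^ 2 = c ⬝ᵥ c := by
      simp [dotProduct, sq]
    have h2 : c ⬝ᵥ c = w ⬝ᵥ Mc *ᵥ w := by
      rw [hcvec, dotProduct_mulVec, ← mulVec_transpose, hCcsymm, mulVec_mulVec,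
        hCcCc, dotProduct_comm]
    have hwvec : w = Complex.I • (fun i => ((Y i : ℝ) : ℂ))
        - (κ : ℂ) • (fun i => ((Φpκ i : ℝ) : ℂ)) := funext fun i => by simp [hw]
    rw [h1, h2, hwvec]
    simp only [sub_dotProduct, dotProduct_sub, Matrix.mulVec_sub, smul_dotProduct,
      dotProduct_smul, Matrix.mulVec_smul, smul_eq_mul]
    rw [hcast Y Y, hcast Y Φpκ, hcast Φpκ Y, hcast Φpκ Φpκ, hcross]
    linear_combination ((Y ⬝ᵥ A⁻¹ *ᵥ Y : ℝ) : ℂ) * Complex.I_mul_I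
  rw [hsum]
  -- prefactor
  have hCdetA : C.det = A.det ^ (-(1 : ℝ)/2) := by
    have hBA : B.det = Real.sqrt A.det := by
      have h := Real.sqrt_mul_self hdetBnn
      rw [hdetB2] at h
      exact h.symm
    rw [hdetC, hBA, Real.sqrt_eq_rpow, show (-(1:ℝ)/2) = -(1/2 : ℝ) by norm_num,
      Real.rpow_neg hdetA.le]
  have hpref : (Complex.ofReal (C.det)) * ((Real.pi : ℂ) / (1/2)) ^ ((Fintype.card (Fin P) : ℂ) / 2)
      = Complex.ofReal ((2 * Real.pi) ^ ((P : ℝ) / 2) * A.det ^ (-(1 : ℝ) / 2)) := by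
    have h1 : ((Real.pi : ℂ) / (1/2)) = ((2 * Real.pi : ℝ) : ℂ) := by
      push_cast; ring
    have h2 : ((2 * Real.pi : ℝ) : ℂ) ^ ((Fintype.card (Fin P) : ℂ) / 2)
        = Complex.ofReal ((2 * Real.pi) ^ ((P : ℝ) / 2)) := by
      rw [Complex.ofReal_cpow (by positivity) ((P : ℝ) / 2)]
      congr 1
      push_cast [Fintype.card_fin]
      ring
    rw [h1, h2, hCdetA, ← Complex.ofReal_mul, mul_comm]
  have hexp : Complex.exp ((-((Y ⬝ᵥ A⁻¹ *ᵥ Y : ℝ) : ℂ)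
          - 2 * Complex.I * (κ : ℂ) * ((Φpκ ⬝ᵥ A⁻¹ *ᵥ Y : ℝ) : ℂ)
          + (κ : ℂ) ^ 2 * ((Φpκ ⬝ᵥ A⁻¹ *ᵥ Φpκ : ℝ) : ℂ)) / (4 * (1 / 2)))
        * Complex.exp (-(((1 / 2) * κ ^ 2 * Φκκ : ℝ) : ℂ))
      = Complex.exp (Complex.ofReal (-(1 / 2) * (Y ⬝ᵥ A⁻¹ *ᵥ Y))
          - Complex.I * Complex.ofReal (κ * (Φpκ ⬝ᵥ A⁻¹ *ᵥ Y))
          - Complex.ofReal ((1 / 2) * κ ^ 2 * (Φκκ - Φpκ ⬝ᵥ A⁻¹ *ᵥ Φpκ))) := by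
    rw [← Complex.exp_add]
    congr 1
    push_cast
    ring
  rw [Complex.real_smul,
    show ∀ d x s t : ℂ, d * (x * s) * t = d * x * (s * t) from fun d x s t => by ring,
    hpref, hexp]
end

section
/- Under the shaped-ReLU Neural Covariance SDE drift b(Φ) = D^{1/2} ρ(D^{-1/2} Φ D^{-1/2}) D^{1/2} with ρ as above and D = diag(Φ), the diagonal entries satisfy b(Φ)_{αα} = 0 for all α; hence under the SDE dΦ_t = α b(Φ_t) dt + Φ_t^{1/2} dB_t Φ_t^{1/2}, each diagonal entry (Φ_t)_{αα} is a driftless geometric Brownian motion. -/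
open MeasureTheory

/-- Elementary matrix direction `E_{ij}`. -/
noncomputable def stdBasisM (P : ℕ) (i j : Fin P) : Fin P → Fin P → ℝ :=
  fun a b => if a = i ∧ b = j then 1 else 0

/-- Generator of the matrix SDE `dΦ = α b(Φ) dt + Φ^{1/2} dB Φ^{1/2}`. -/
noncomputable def matGen (P : ℕ) (α : ℝ)
    (b : (Fin P → Fin P → ℝ) → (Fin P → Fin P → ℝ))
    (F : (Fin P → Fin P → ℝ) → ℝ) (Φ : Fin P → Fin P → ℝ) : ℝ :=
  α * ∑ i, ∑ j, b Φ i j * fderiv ℝ F Φ (stdBasisM P i j) +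
  (1 / 2) * ∑ i, ∑ j, ∑ k, ∑ l, (Φ i k * Φ j l + Φ i l * Φ j k) *
    fderiv ℝ (fun M => fderiv ℝ F M (stdBasisM P k l)) Φ (stdBasisM P i j)



noncomputable def evalAA (P : ℕ) (a : Fin P) : (Fin P → Fin P → ℝ) →L[ℝ] ℝ :=
  (ContinuousLinearMap.proj a).comp (ContinuousLinearMap.proj (R := ℝ) (φ := fun _ : Fin P => Fin P → ℝ) a)

lemma evalAA_apply (P : ℕ) (a : Fin P) (M : Fin P → Fin P → ℝ) : evalAA P a M = M a a := rfl

lemma key_fderiv (P : ℕ) (a : Fin P) (g : ℝ → ℝ) (hg : Differentiable ℝ g)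
    (M : Fin P → Fin P → ℝ) :
    fderiv ℝ (fun M : Fin P → Fin P → ℝ => g (M a a)) M = deriv g (M a a) • evalAA P a := by
  have h := ((hg (M a a)).hasDerivAt).comp_hasFDerivAt M ((evalAA P a).hasFDerivAt)
  exact h.fderiv



lemma matGen_diag (P : ℕ) (αc : ℝ)
    (b : (Fin P → Fin P → ℝ) → (Fin P → Fin P → ℝ))
    (g : ℝ → ℝ) (hg : ContDiff ℝ 2 g) (a : Fin P)
    (Φ0 : Fin P → Fin P → ℝ) (hb0 : b Φ0 a a = 0) :
    matGen P αc b (fun M => g (M a a)) Φ0 = Φ0 a a ^ 2 * deriv (deriv g) (Φ0 a a) := by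
  have hgd : Differentiable ℝ g := hg.differentiable (by norm_num)
  have hdg : ContDiff ℝ 1 (deriv g) := by
    have h2 : ContDiff ℝ ((1 : ℕ) + 1) g := by exact_mod_cast hg
    exact (contDiff_succ_iff_deriv.mp h2).2.2
  have hdgd : Differentiable ℝ (deriv g) := hdg.differentiable (by norm_num)
  have hF1 : ∀ (M v : Fin P → Fin P → ℝ),
      fderiv ℝ (fun M : Fin P → Fin P → ℝ => g (M a a)) M v = deriv g (M a a) * v a a := by
    intro M v
    rw [key_fderiv P a g hgd M]
    simp [evalAA_apply]
  have hF2 : ∀ (w : Fin P → Fin P → ℝ) (v : Fin P → Fin P → ℝ),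
      fderiv ℝ (fun M => fderiv ℝ (fun M : Fin P → Fin P → ℝ => g (M a a)) M w) Φ0 v
        = w a a * (deriv (deriv g) (Φ0 a a) * v a a) := by
    intro w v
    have he : (fun M => fderiv ℝ (fun M : Fin P → Fin P → ℝ => g (M a a)) M w)
        = fun M => deriv g (M a a) * w a a := funext fun M => hF1 M w
    rw [he]
    have hd : DifferentiableAt ℝ (fun M : Fin P → Fin P → ℝ => deriv g (M a a)) Φ0 := by
      exact (hdgd.comp (evalAA P a).differentiable).differentiableAt
    rw [fderiv_mul_const hd]
    simp only [ContinuousLinearMap.smul_apply, smul_eq_mul]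
    rw [key_fderiv P a (deriv g) hdgd Φ0]
    simp [evalAA_apply]
  unfold matGen
  have hs1 : ∑ i, ∑ j, b Φ0 i j * fderiv ℝ (fun M : Fin P → Fin P → ℝ => g (M a a)) Φ0 (stdBasisM P i j) = 0 := by
    simp only [hF1, stdBasisM, ite_and]
    simp [Finset.sum_ite_eq, hb0]
  have hs2 : ∑ i, ∑ j, ∑ k, ∑ l, (Φ0 i k * Φ0 j l + Φ0 i l * Φ0 j k) *
      fderiv ℝ (fun M => fderiv ℝ (fun M : Fin P → Fin P → ℝ => g (M a a)) M (stdBasisM P k l)) Φ0 (stdBasisM P i j)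
      = 2 * (Φ0 a a ^ 2 * deriv (deriv g) (Φ0 a a)) := by
    simp only [hF2, stdBasisM, ite_and]
    simp [Finset.sum_ite_eq]
    ring
  rw [hs1, hs2]
  ring

/-- For the shaped-ReLU Neural Covariance SDE drift
`b(Φ) = D^{1/2} ρ̂(D^{-1/2} Φ D^{-1/2}) D^{1/2}` with
`ρ̂(x) = ((c₊−c₋)²/(2π))(√(1−x²) − x arccos x)` and `D = diag(Φ)`, the diagonal entries
of the drift vanish: `b(Φ)_{αα} = 0`. Hence under the SDE
`dΦ_t = α b(Φ_t) dt + Φ_t^{1/2} dB_t Φ_t^{1/2}` (in the martingale-problem sense),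
each diagonal entry `(Φ_t)_{αα}` is a driftless geometric Brownian motion
`d(Φ_t)_{αα} = √2 (Φ_t)_{αα} dW_t`, i.e. it solves the scalar martingale problem with
zero drift and diffusion coefficient `(√2 s)²/2 = s²`. -/
theorem stmt13 {Ω : Type*} {m0 : MeasurableSpace Ω} (μ : Measure Ω)
    [IsProbabilityMeasure μ]
    (P : ℕ) (cp cm αc : ℝ)
    (ρhat : ℝ → ℝ)
    (hρhat : ∀ x, ρhat x = ((cp - cm) ^ 2 / (2 * Real.pi)) *
      (Real.sqrt (1 - x ^ 2) - x * Real.arccos x))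
    (b : (Fin P → Fin P → ℝ) → (Fin P → Fin P → ℝ))
    (hb : ∀ (Φ : Fin P → Fin P → ℝ) (i j : Fin P),
      b Φ i j = Real.sqrt (Φ i i) *
        ρhat (Φ i j / (Real.sqrt (Φ i i) * Real.sqrt (Φ j j))) * Real.sqrt (Φ j j))
    (ℱ : Filtration ℝ m0)
    (Φ : ℝ → Ω → (Fin P → Fin P → ℝ))
    (hAdapted : Adapted ℱ Φ)
    (hPSD : ∀ t ω, (∀ i j, Φ t ω i j = Φ t ω j i) ∧
      ∀ u : Fin P → ℝ, 0 ≤ ∑ i, ∑ j, u i * Φ t ω i j * u j)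
    (hdiagpos : ∀ t ω γ, 0 < Φ t ω γ γ)
    (hMP : ∀ F : (Fin P → Fin P → ℝ) → ℝ, ContDiff ℝ 2 F →
      Martingale
        (fun t ω => F (Φ t ω) - ∫ r in (0 : ℝ)..t, matGen P αc b F (Φ r ω)) ℱ μ)
    (a : Fin P) :
    (∀ A : Fin P → Fin P → ℝ, (∀ γ, 0 < A γ γ) → b A a a = 0) ∧
    (∀ g : ℝ → ℝ, ContDiff ℝ 2 g →
      Martingale
        (fun t ω =>
          g (Φ t ω a a) -
            ∫ r in (0 : ℝ)..t, (Φ r ω a a) ^ 2 * deriv (deriv g) (Φ r ω a a)) ℱ μ) := by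
  constructor
  · intro A hA
    rw [hb, hρhat, Real.mul_self_sqrt (hA a).le, div_self (hA a).ne', Real.arccos_one]
    norm_num
  · intro g hg
    have hb0 : ∀ A : Fin P → Fin P → ℝ, (∀ γ, 0 < A γ γ) → b A a a = 0 := by
      intro A hA
      rw [hb, hρhat, Real.mul_self_sqrt (hA a).le, div_self (hA a).ne', Real.arccos_one]
      norm_num
    have hF : ContDiff ℝ 2 (fun M : Fin P → Fin P → ℝ => g (M a a)) :=
      hg.comp (evalAA P a).contDiff
    have hM := hMP _ hF
    have heq : (fun t ω => (fun M : Fin P → Fin P → ℝ => g (M a a)) (Φ t ω) -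
        ∫ r in (0 : ℝ)..t, matGen P αc b (fun M : Fin P → Fin P → ℝ => g (M a a)) (Φ r ω))
        = fun t ω => g (Φ t ω a a) -
            ∫ r in (0 : ℝ)..t, (Φ r ω a a) ^ 2 * deriv (deriv g) (Φ r ω a a) := by
      funext t ω
      congr 1
      congr 1
      funext r
      exact matGen_diag P αc b g hg a (Φ r ω) (hb0 (Φ r ω) (fun γ => hdiagpos r ω γ))
    exact heq ▸ hM
end
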